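/- Let C be a small category and let Q : C ⥤ Q_C be the coequalizer in Cat of the pair of functors d0, d1 : ∐_{σ} 1 ⇉ C, where the coproduct of copies of the terminal category 1 is indexed by the set of all isomorphisms σ of C, and d0 (respectively d1) sends the object of the σ-indexed copy of 1 to the domain (respectively codomain) of σ. Let i : Core(C) ⥤ C denote the inclusion of the core of C. Then for every small category X and every functor G : X ⥤ C such that Q ∘ G is trivial (i.e., Q maps every morphism G(x) to an automorphism of Q_C), there exists a unique functor G' : X ⥤ Core(C) with i ∘ G' = G. -/

import Mathlib

open CategoryTheory Limits

universe u

/-- A functor is trivial if it maps every morphism to an automorphism: the images of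
domain and codomain are equal and the image of the morphism is an isomorphism. -/
def IsTrivialFunctor {X : Type*} {Y : Type*} [Category X] [Category Y] (F : X ⥤ Y) :
    Prop :=
  ∀ (a b : X) (f : a ⟶ b), F.obj a = F.obj b ∧ IsIso (F.map f)

/-- The set of isomorphisms of `C`, used to index a copower of the terminal category:
this coproduct of copies of the terminal category `1` is the discrete category on the
set of isomorphisms of `C`. -/
def IsoIndex (C : Type u) [Category.{u} C] : Type u := Σ X Y : C, X ≅ Y

/-- The functor `d0` sending the object of the copy of `1` indexed by an isomorphism
`σ` of `C` to the domain of `σ`. -/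
def isoDom (C : Type u) [Category.{u} C] :
    Cat.of (Discrete (IsoIndex C)) ⟶ Cat.of C :=
  (Discrete.functor fun (σ : IsoIndex C) => σ.1).toCatHom

/-- The functor `d1` sending the object of the copy of `1` indexed by an isomorphism
`σ` of `C` to the codomain of `σ`. -/
def isoCod (C : Type u) [Category.{u} C] :
    Cat.of (Discrete (IsoIndex C)) ⟶ Cat.of C :=
  (Discrete.functor fun (σ : IsoIndex C) => σ.2.1).toCatHom

lemma core_eqToHom_hom {D : Type*} [Category D] {x y : Core D} (p : x = y) :
    (eqToHom p).iso.hom = eqToHom (congrArg (Core.inclusion D).obj p) := by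
  cases p; rfl


/-- Let `Q = c.π : C ⥤ Q_C` be the coequalizer in `Cat` of `d0, d1 : ∐_σ 1 ⇉ C`.
Every functor `G : X ⥤ C` whose composite with `Q` is trivial factors uniquely through
the inclusion of the core of `C`.  (This is the `Z`-kernel property of the core.) -/
theorem core_zKernel_of_coequalizer (C : Type u) [Category.{u} C]
    (c : Cofork (isoDom C) (isoCod C)) (hc : IsColimit c)
    (X : Type u) [Category.{u} X] (G : X ⥤ C)
    (hG : IsTrivialFunctor (G ⋙ (c.π.toFunctor : C ⥤ c.pt))) :
    ∃! G' : X ⥤ Core C, G' ⋙ Core.inclusion C = G := by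
  classical
  -- the test cocone: C ⥤ Skeleton C
  let T : Cat.of C ⟶ Cat.of (Skeleton C) := (toSkeletonFunctor C).toCatHom
  haveI : T.toFunctor.IsEquivalence :=
    Equivalence.isEquivalence_inverse (skeletonEquivalence C)
  have w : isoDom C ≫ T = isoCod C ≫ T := by
    apply Cat.ext
    show (isoDom C).toFunctor ⋙ T.toFunctor = (isoCod C).toFunctor ⋙ T.toFunctor
    apply CategoryTheory.Functor.ext
    · rintro ⟨f⟩ ⟨g⟩ ⟨⟨(a : f = g)⟩⟩
      subst a
      erw [CategoryTheory.Functor.map_id ((isoDom C).toFunctor ⋙ T.toFunctor) ⟨f⟩,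
        CategoryTheory.Functor.map_id ((isoCod C).toFunctor ⋙ T.toFunctor) ⟨f⟩]
      erw [Category.id_comp, eqToHom_trans]
      rfl
    · rintro ⟨⟨A, B, σ⟩⟩
      exact Quotient.sound ⟨σ⟩
  let h : c.pt ⟶ Cat.of (Skeleton C) := Cofork.IsColimit.desc hc T w
  have hw : c.π.toFunctor ⋙ h.toFunctor = T.toFunctor :=
    congrArg Cat.Hom.toFunctor (Cofork.IsColimit.π_desc hc)
  have hiso : ∀ {a b : X} (f : a ⟶ b), IsIso (G.map f) := by
    intro a b f
    have h1 : IsIso (c.π.toFunctor.map (G.map f)) := (hG a b f).2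
    haveI h2 : IsIso ((c.π.toFunctor ⋙ h.toFunctor).map (G.map f)) := by
      show IsIso (h.toFunctor.map (c.π.toFunctor.map (G.map f)))
      infer_instance
    have h3 : IsIso (T.toFunctor.map (G.map f)) := by
      rw [Functor.congr_hom hw.symm (G.map f)]
      infer_instance
    exact @isIso_of_reflects_iso _ _ _ _ _ _ (G.map f) (skeletonEquivalence C).inverse h3 _
  refine ⟨{ obj := fun x => ⟨G.obj x⟩
            map := fun f => ⟨@asIso _ _ _ _ _ (hiso f)⟩
            map_id := by intro x; apply Core.hom_ext; simp
            map_comp := by intro x y z f g; apply Core.hom_ext; simp }, ?_, ?_⟩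
  · apply CategoryTheory.Functor.ext
    · intro x y f; simp [Core.inclusion]; exact (Category.id_comp _).symm
    · intro x; rfl
  · intro F hF
    apply CategoryTheory.Functor.ext
    · intro x y f
      apply Core.hom_ext
      have h1 := Functor.congr_hom hF f
      simp [Core.inclusion] at h1
      simp [core_eqToHom_hom]
      exact h1
    · intro x
      exact congrArg Core.mk (Functor.congr_obj hF x)
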